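/- Let H be a graph with chromatic number χ ≥ 2, and let G be the graph obtained by subdividing every edge of H exactly once. Then box(G) ≤ ⌈log₂ log₂ χ⌉ + 3. -/

import Mathlib

/-- A `k`-box representation of a simple graph: each vertex gets an axis-parallel box
`∏ i, [l v i, r v i]` in `ℝ^k`, and distinct vertices are adjacent iff their boxes meet. -/
def SimpleGraph.HasBoxRep {V : Type*} (G : SimpleGraph V) (k : ℕ) : Prop :=
  ∃ l r : V → Fin k → ℝ, (∀ v i, l v i ≤ r v i) ∧
    ∀ u v : V, u ≠ v →
      (G.Adj u v ↔ ∀ i, max (l u i) (l v i) ≤ min (r u i) (r v i))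

/-- Boxicity: the minimum `k` such that `G` has a `k`-box representation. -/
noncomputable def SimpleGraph.boxicity {V : Type*} (G : SimpleGraph V) : ℕ :=
  sInf {k | G.HasBoxRep k}

/-- The full subdivision of `H`: every edge of `H` is subdivided exactly once; the new
vertex corresponding to an edge `e` is adjacent exactly to the two endpoints of `e`. -/
def fullSubdivision {V : Type*} (H : SimpleGraph V) : SimpleGraph (V ⊕ H.edgeSet) :=
  SimpleGraph.fromRel (fun a b =>
    match a, b with
    | Sum.inl v, Sum.inr e => v ∈ (e : Sym2 V)
    | _, _ => False)


open Finset in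
private lemma sum_two_pow_lt (s : ℕ) : (∑ p ∈ range s, 2^p) < 2^s := by
  induction s with
  | zero => simp
  | succ n ih =>
    rw [Finset.sum_range_succ, pow_succ]
    omega

open Finset in
private lemma sum_pow_lt {L s : ℕ} (f g : ℕ → Bool) (hs : s < L)
    (hag : ∀ p, s < p → p < L → f p = g p) (hf : f s = false) (hg : g s = true) :
    (∑ p ∈ range L, if f p then 2^p else 0) < (∑ p ∈ range L, if g p then 2^p else 0) := by
  have hsplit : ∀ h : ℕ → Bool, (∑ p ∈ range L, if h p then 2^p else 0)
      = (∑ p ∈ range (s+1), if h p then 2^p else 0)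
        + (∑ p ∈ Ico (s+1) L, if h p then 2^p else 0) := by
    intro h
    rw [Finset.range_eq_Ico, ← Finset.sum_Ico_consecutive _ (Nat.zero_le _) hs,
      ← Finset.range_eq_Ico]
  rw [hsplit f, hsplit g]
  have htail : (∑ p ∈ Ico (s+1) L, if f p then 2^p else 0)
      = (∑ p ∈ Ico (s+1) L, if g p then 2^p else 0) := by
    apply Finset.sum_congr rfl
    intro p hp
    rw [Finset.mem_Ico] at hp
    rw [hag p (by omega) hp.2]
  rw [htail]
  have h1 : (∑ p ∈ range (s+1), if f p then 2^p else 0) < 2^s := by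
    rw [Finset.sum_range_succ, hf]
    simp only [Bool.false_eq_true, if_false, add_zero]
    calc (∑ p ∈ range s, if f p then 2^p else 0) ≤ ∑ p ∈ range s, 2^p := by
          apply Finset.sum_le_sum; intro p _; split <;> simp
      _ < 2^s := sum_two_pow_lt s
  have h2 : 2^s ≤ (∑ p ∈ range (s+1), if g p then 2^p else 0) := by
    rw [Finset.sum_range_succ, hg]
    simp
  omega

private lemma msb_ne {a b : ℕ} (h : a ≠ b) :
    a.testBit (Nat.log 2 (a ^^^ b)) ≠ b.testBit (Nat.log 2 (a ^^^ b)) := by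
  have hx0 : a ^^^ b ≠ 0 := by simpa [xor_eq_zero_iff] using h
  have h1 : 2 ^ Nat.log 2 (a ^^^ b) ≤ a ^^^ b := Nat.pow_log_le_self 2 hx0
  have h2 : a ^^^ b < 2 ^ (Nat.log 2 (a ^^^ b) + 1) :=
    Nat.lt_pow_succ_log_self (by norm_num) _
  have hdiv : (a ^^^ b) / 2 ^ Nat.log 2 (a ^^^ b) = 1 := by
    rw [pow_succ] at h2
    exact Nat.div_eq_of_lt_le (by omega) (by omega)
  have ht : (a ^^^ b).testBit (Nat.log 2 (a ^^^ b)) = true := by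
    rw [Nat.testBit_eq_decide_div_mod_eq, hdiv]
    rfl
  rw [Nat.testBit_xor] at ht
  intro heq
  rw [heq] at ht
  simp at ht

private lemma msb_agree {a b : ℕ} (h : a ≠ b) :
    ∀ q, Nat.log 2 (a ^^^ b) < q → a.testBit q = b.testBit q := by
  intro q hq
  have h2 : a ^^^ b < 2 ^ (Nat.log 2 (a ^^^ b) + 1) :=
    Nat.lt_pow_succ_log_self (by norm_num) _
  have h3 : a ^^^ b < 2 ^ q := lt_of_lt_of_le h2 (Nat.pow_le_pow_right (by norm_num) hq)
  have h4 : (a ^^^ b).testBit q = false := Nat.testBit_eq_false_of_lt h3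
  rw [Nat.testBit_xor] at h4
  rcases Bool.eq_false_or_eq_true (a.testBit q) with h | h <;>
    rcases Bool.eq_false_or_eq_true (b.testBit q) with h' | h' <;>
    simp_all

private lemma msb_lt {a b L : ℕ} (h : a ≠ b) (ha : a < 2^L) (hb : b < 2^L) :
    Nat.log 2 (a ^^^ b) < L := by
  have hx0 : a ^^^ b ≠ 0 := by simpa [xor_eq_zero_iff] using h
  exact Nat.log_lt_of_lt_pow hx0 (Nat.xor_lt_two_pow ha hb)

/-- Masked key. -/
private def KL (L : ℕ) (μ : ℕ → Bool) (a : ℕ) : ℕ :=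
  ∑ p ∈ Finset.range L, if xor (a.testBit p) (μ p) then 2^p else 0

private lemma KL_lt {L : ℕ} (μ : ℕ → Bool) {a b p : ℕ} (hp : p < L)
    (hdif : a.testBit p ≠ b.testBit p)
    (hag : ∀ q, p < q → a.testBit q = b.testBit q)
    (hx : xor (a.testBit p) (μ p) = false) :
    KL L μ a < KL L μ b := by
  apply sum_pow_lt (f := fun q => xor (a.testBit q) (μ q))
    (g := fun q => xor (b.testBit q) (μ q)) hp
  · intro q hq _; rw [hag q hq]
  · exact hx
  · rcases Bool.eq_false_or_eq_true (a.testBit p) with h | h <;>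
      rcases Bool.eq_false_or_eq_true (b.testBit p) with h' | h' <;>
      simp_all

/-- If `H` has chromatic number `χ ≥ 2` and `G` is the full subdivision of `H`,
then `box(G) ≤ ⌈log₂ log₂ χ⌉ + 3`. -/
theorem boxicity_fullSubdivision_chromatic {V : Type*} [Fintype V]
    (H : SimpleGraph V) (χ : ℕ) (hχ : H.chromaticNumber = (χ : ℕ∞)) (h2 : 2 ≤ χ) :
    (fullSubdivision H).boxicity ≤ Nat.clog 2 (Nat.clog 2 χ) + 3 := by
  classical
  obtain ⟨C⟩ : H.Colorable χ :=
    SimpleGraph.chromaticNumber_le_iff_colorable.mp (le_of_eq hχ)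
  set L := Nat.clog 2 χ with hLdef
  set t := Nat.clog 2 L with htdef
  have hLle : L ≤ 2 ^ t := Nat.le_pow_clog (by norm_num) L
  set c : V → ℕ := fun v => (C v : ℕ) with hcdef
  have hclt : ∀ v, c v < 2 ^ L :=
    fun v => lt_of_lt_of_le (C v).isLt (Nat.le_pow_clog (by norm_num) χ)
  have hproper : ∀ {u w : V}, H.Adj u w → c u ≠ c w :=
    fun h hc => C.valid h (Fin.ext hc)
  -- masks
  set m : ℕ → ℕ → Bool := fun j p =>
    if j = 0 then false else if j = 1 then true else p.testBit (j - 2) with hmdef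
  have hm0 : ∀ p, m 0 p = false := fun p => by simp [hmdef]
  have hm1 : ∀ p, m 1 p = true := fun p => by simp [hmdef]
  have hm2 : ∀ j' p, m (j' + 2) p = p.testBit j' := fun j' p => by
    simp [hmdef]
  -- single position helper
  have hone : ∀ (p : ℕ) (β ε : Bool), ∃ j < t + 2, xor β (m j p) = ε := by
    intro p β ε
    by_cases h : β = ε
    · exact ⟨0, by omega, by rw [hm0]; cases β <;> simp_all⟩
    · refine ⟨1, by omega, by rw [hm1]; cases β <;> cases ε <;> simp_all⟩
  -- two position helper
  have htwo : ∀ p q : ℕ, p < L → q < L → p ≠ q → ∀ β γ : Bool,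
      ∃ j < t + 2, xor β (m j p) = xor γ (m j q) := by
    intro p q hp hq hpq β γ
    have hboo : ∀ a b x y : Bool, xor x y = xor a b → xor a x = xor b y := by decide
    by_cases h : β = γ
    · exact ⟨0, by omega, by rw [hm0, hm0, h]⟩
    · refine ⟨Nat.log 2 (p ^^^ q) + 2, ?_, ?_⟩
      · have := msb_lt hpq (lt_of_lt_of_le hp hLle) (lt_of_lt_of_le hq hLle)
        omega
      · rw [hm2, hm2]
        have hne := msb_ne hpq
        revert hne h
        cases β <;> cases γ <;>
          cases hb1 : p.testBit (Nat.log 2 (p ^^^ q)) <;>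
          cases hb2 : q.testBit (Nat.log 2 (p ^^^ q)) <;> simp
  -- K-order helper
  have hbool1 : ∀ x y z : Bool, x ≠ y → xor x z = true → xor y z = false := by decide
  have hKord : ∀ (j : ℕ) {a b p : ℕ}, p < L → a.testBit p ≠ b.testBit p →
      (∀ q, p < q → a.testBit q = b.testBit q) →
      (xor (a.testBit p) (m j p) = false → KL L (m j) a < KL L (m j) b) ∧
      (xor (a.testBit p) (m j p) = true → KL L (m j) b < KL L (m j) a) := by
    intro j a b p hp hdif hag
    refine ⟨fun hx => KL_lt _ hp hdif hag hx, fun hx => ?_⟩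
    exact KL_lt _ hp (Ne.symm hdif) (fun q hq => (hag q hq).symm)
      (hbool1 _ _ _ hdif hx)
  -- vertex indices
  set N := Fintype.card V with hNdef
  set idx : V → ℕ := fun v => ((Fintype.equivFin V) v : ℕ) with hidxdef
  have hidxlt : ∀ v, idx v < N := fun v => ((Fintype.equivFin V) v).isLt
  have hidxinj : ∀ v u : V, idx v = idx u → v = u :=
    fun v u h => (Fintype.equivFin V).injective (Fin.ext h)
  set x : ℕ → V → ℕ := fun j v => KL L (m j) (c v) * N + idx v with hxdef
  have hxlt_of_K : ∀ (j : ℕ) (v u : V),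
      KL L (m j) (c v) < KL L (m j) (c u) → x j v < x j u := by
    intro j v u hK
    have h1 : x j v < (KL L (m j) (c v) + 1) * N := by
      simp only [hxdef, Nat.succ_mul]
      have := hidxlt v
      omega
    calc x j v < (KL L (m j) (c v) + 1) * N := h1
      _ ≤ KL L (m j) (c u) * N := Nat.mul_le_mul_right N (Nat.succ_le_of_lt hK)
      _ ≤ x j u := Nat.le_add_right _ _
  have hxlt_of_idx : ∀ (j : ℕ) (v u : V), c v = c u → idx v < idx u → x j v < x j u := by
    intro j v u hc hlt
    simp only [hxdef, hc]
    omega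
  have hxinj : ∀ (j : ℕ) (v u : V), x j v = x j u → v = u := by
    intro j v u h
    apply hidxinj
    have h1 := hidxlt v
    have h2 := hidxlt u
    have hm1' : (KL L (m j) (c v) * N + idx v) % N = idx v := by
      rw [Nat.mul_comm, Nat.mul_add_mod, Nat.mod_eq_of_lt h1]
    have hm2' : (KL L (m j) (c u) * N + idx u) % N = idx u := by
      rw [Nat.mul_comm, Nat.mul_add_mod, Nat.mod_eq_of_lt h2]
    simp only [hxdef] at h
    rw [← hm1', ← hm2', h]
  -- edges
  haveI : Fintype H.edgeSet := Fintype.ofFinite _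
  set M := Fintype.card H.edgeSet with hMdef
  set gidx : H.edgeSet → ℕ := fun e => ((Fintype.equivFin H.edgeSet) e : ℕ) with hgdef
  have hglt : ∀ e, gidx e < M := fun e => ((Fintype.equivFin H.edgeSet) e).isLt
  have hginj : ∀ e e' : H.edgeSet, gidx e = gidx e' → e = e' :=
    fun e e' h => (Fintype.equivFin H.edgeSet).injective (Fin.ext h)
  have hrepex : ∀ e : H.edgeSet, ∃ uw : V × V,
      (e : Sym2 V) = s(uw.1, uw.2) ∧ H.Adj uw.1 uw.2 := by
    rintro ⟨e, he⟩
    revert he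
    refine Sym2.ind (fun u w he => ⟨(u, w), rfl, ?_⟩) e
    exact H.mem_edgeSet.mp he
  set ue : H.edgeSet → V := fun e => (Classical.choose (hrepex e)).1 with huedef
  set we : H.edgeSet → V := fun e => (Classical.choose (hrepex e)).2 with hwedef
  have hspec : ∀ e : H.edgeSet, (e : Sym2 V) = s(ue e, we e) ∧ H.Adj (ue e) (we e) :=
    fun e => Classical.choose_spec (hrepex e)
  have hmem : ∀ (v : V) (e : H.edgeSet), v ∈ (e : Sym2 V) ↔ v = ue e ∨ v = we e := by
    intro v e
    rw [(hspec e).1, Sym2.mem_iff]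
  -- the key separation lemma
  have main : ∀ (v : V) (e : H.edgeSet), v ≠ ue e → v ≠ we e →
      ∃ j < t + 2, (x j v < x j (ue e) ∧ x j v < x j (we e)) ∨
        (x j (ue e) < x j v ∧ x j (we e) < x j v) := by
    intro v e hvu hvw
    have hadj := (hspec e).2
    have hbd : c (ue e) ≠ c (we e) := hproper hadj
    set u := ue e with hudef
    set w := we e with hwdef
    set a := c v with hadef
    set b := c u with hbdef
    set d := c w with hddef
    set P := Nat.log 2 (b ^^^ d) with hPdef
    have hPlt : P < L := msb_lt hbd (hclt u) (hclt w)
    have hPdif : b.testBit P ≠ d.testBit P := msb_ne hbd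
    have hPag : ∀ q, P < q → b.testBit q = d.testBit q := msb_agree hbd
    by_cases hab : a = b
    · -- v has same color as u; tie broken by idx
      have hidxne : idx v ≠ idx u := fun h => hvu (hidxinj _ _ h)
      rcases Nat.lt_or_ge (idx v) (idx u) with hlt | hge
      · obtain ⟨j, hj, hxj⟩ := hone P (b.testBit P) false
        have hKbd : KL L (m j) b < KL L (m j) d := (hKord j hPlt hPdif hPag).1 hxj
        have h1 : x j v < x j u := hxlt_of_idx j v u hab hlt
        have h2 : x j u < x j w := hxlt_of_K j u w hKbd
        exact ⟨j, hj, Or.inl ⟨h1, lt_trans h1 h2⟩⟩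
      · have hgt : idx u < idx v := by omega
        obtain ⟨j, hj, hxj⟩ := hone P (b.testBit P) true
        have hKdb : KL L (m j) d < KL L (m j) b := (hKord j hPlt hPdif hPag).2 hxj
        have h1 : x j u < x j v := hxlt_of_idx j u v hab.symm hgt
        have h2 : x j w < x j u := hxlt_of_K j w u hKdb
        exact ⟨j, hj, Or.inr ⟨h1, lt_trans h2 h1⟩⟩
    · by_cases had : a = d
      · -- v has same color as w; tie broken by idx
        have hidxne : idx v ≠ idx w := fun h => hvw (hidxinj _ _ h)
        have hDdif : d.testBit P ≠ b.testBit P := Ne.symm hPdif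
        have hDag : ∀ q, P < q → d.testBit q = b.testBit q :=
          fun q hq => (hPag q hq).symm
        rcases Nat.lt_or_ge (idx v) (idx w) with hlt | hge
        · obtain ⟨j, hj, hxj⟩ := hone P (d.testBit P) false
          have hKdb : KL L (m j) d < KL L (m j) b := (hKord j hPlt hDdif hDag).1 hxj
          have h1 : x j v < x j w := hxlt_of_idx j v w had hlt
          have h2 : x j w < x j u := hxlt_of_K j w u hKdb
          exact ⟨j, hj, Or.inl ⟨lt_trans h1 h2, h1⟩⟩
        · have hgt : idx w < idx v := by omega
          obtain ⟨j, hj, hxj⟩ := hone P (d.testBit P) true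
          have hKbd : KL L (m j) b < KL L (m j) d := (hKord j hPlt hDdif hDag).2 hxj
          have h1 : x j w < x j v := hxlt_of_idx j w v had.symm hgt
          have h2 : x j u < x j w := hxlt_of_K j u w hKbd
          exact ⟨j, hj, Or.inr ⟨lt_trans h2 h1, h1⟩⟩
      · -- v's color differs from both endpoint colors
        set s := Nat.log 2 (a ^^^ b) with hsdef
        have hslt : s < L := msb_lt hab (hclt v) (hclt u)
        have hsdif : a.testBit s ≠ b.testBit s := msb_ne hab
        have hsag : ∀ q, s < q → a.testBit q = b.testBit q := msb_agree hab
        rcases lt_trichotomy s P with hsP | hsP | hsP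
        · -- s < P : (a,d) differ at P, agree above P
          have haP : a.testBit P = b.testBit P := hsag P hsP
          have hadP : a.testBit P ≠ d.testBit P := by rw [haP]; exact hPdif
          have hadag : ∀ q, P < q → a.testBit q = d.testBit q :=
            fun q hq => (hsag q (lt_trans hsP hq)).trans (hPag q hq)
          obtain ⟨j, hj, hxeq⟩ := htwo s P hslt hPlt (by omega)
            (a.testBit s) (a.testBit P)
          cases hx : xor (a.testBit P) (m j P) with
          | false =>
            have h1 : KL L (m j) a < KL L (m j) d := (hKord j hPlt hadP hadag).1 hx
            have h2 : KL L (m j) a < KL L (m j) b :=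
              (hKord j hslt hsdif hsag).1 (hxeq.trans hx)
            exact ⟨j, hj, Or.inl ⟨hxlt_of_K j v u h2, hxlt_of_K j v w h1⟩⟩
          | true =>
            have h1 : KL L (m j) d < KL L (m j) a := (hKord j hPlt hadP hadag).2 hx
            have h2 : KL L (m j) b < KL L (m j) a :=
              (hKord j hslt hsdif hsag).2 (hxeq.trans hx)
            exact ⟨j, hj, Or.inr ⟨hxlt_of_K j u v h2, hxlt_of_K j w v h1⟩⟩
        · -- s = P : a agrees with d at P; use r = msb of a ^^^ d
          have haP : a.testBit P = d.testBit P := by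
            have h1 : a.testBit P ≠ b.testBit P := hsP ▸ hsdif
            revert h1 hPdif
            cases a.testBit P <;> cases b.testBit P <;> cases d.testBit P <;> simp
          set r := Nat.log 2 (a ^^^ d) with hrdef
          have hrlt : r < L := msb_lt had (hclt v) (hclt w)
          have hrdif : a.testBit r ≠ d.testBit r := msb_ne had
          have hrag : ∀ q, r < q → a.testBit q = d.testBit q := msb_agree had
          have hrP : r ≠ P := fun h => hrdif (h ▸ haP)
          obtain ⟨j, hj, hxeq⟩ := htwo r P hrlt hPlt hrP
            (a.testBit r) (a.testBit P)
          have habP : a.testBit P ≠ b.testBit P := hsP ▸ hsdif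
          have habag : ∀ q, P < q → a.testBit q = b.testBit q :=
            fun q hq => hsag q (hsP ▸ hq)
          cases hx : xor (a.testBit P) (m j P) with
          | false =>
            have h1 : KL L (m j) a < KL L (m j) b := (hKord j hPlt habP habag).1 hx
            have h2 : KL L (m j) a < KL L (m j) d :=
              (hKord j hrlt hrdif hrag).1 (hxeq.trans hx)
            exact ⟨j, hj, Or.inl ⟨hxlt_of_K j v u h1, hxlt_of_K j v w h2⟩⟩
          | true =>
            have h1 : KL L (m j) b < KL L (m j) a := (hKord j hPlt habP habag).2 hx
            have h2 : KL L (m j) d < KL L (m j) a :=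
              (hKord j hrlt hrdif hrag).2 (hxeq.trans hx)
            exact ⟨j, hj, Or.inr ⟨hxlt_of_K j u v h1, hxlt_of_K j w v h2⟩⟩
        · -- P < s : a differs from both b and d at s; any mask works
          have hbs : b.testBit s = d.testBit s := hPag s hsP
          have hads : a.testBit s ≠ d.testBit s := by rw [← hbs]; exact hsdif
          have hadag : ∀ q, s < q → a.testBit q = d.testBit q :=
            fun q hq => (hsag q hq).trans (hPag q (lt_trans hsP hq))
          cases hx : xor (a.testBit s) (m 0 s) with
          | false =>
            have h1 : KL L (m 0) a < KL L (m 0) b := (hKord 0 hslt hsdif hsag).1 hx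
            have h2 : KL L (m 0) a < KL L (m 0) d := (hKord 0 hslt hads hadag).1 hx
            exact ⟨0, by omega, Or.inl ⟨hxlt_of_K 0 v u h1, hxlt_of_K 0 v w h2⟩⟩
          | true =>
            have h1 : KL L (m 0) b < KL L (m 0) a := (hKord 0 hslt hsdif hsag).2 hx
            have h2 : KL L (m 0) d < KL L (m 0) a := (hKord 0 hslt hads hadag).2 hx
            exact ⟨0, by omega, Or.inr ⟨hxlt_of_K 0 u v h1, hxlt_of_K 0 w v h2⟩⟩
  -- real-arithmetic helpers
  have hsepR : ∀ pv pu pw : ℝ, (pv < pu ∧ pv < pw) ∨ (pu < pv ∧ pw < pv) →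
      ¬ (max pv (min pu pw) ≤ min pv (max pu pw)) := by
    rintro pv pu pw (⟨h1, h2⟩ | ⟨h1, h2⟩) hc
    · have h3 : min pu pw ≤ pv :=
        le_trans (le_trans (le_max_right _ _) hc) (min_le_left _ _)
      have h4 : pv < min pu pw := lt_min h1 h2
      linarith
    · have h3 : pv ≤ max pu pw :=
        le_trans (le_trans (le_max_left _ _) hc) (min_le_right _ _)
      have h4 : max pu pw < pv := max_lt h1 h2
      linarith
  have hptsep : ∀ p q : ℝ, p ≠ q → ¬ (max p q ≤ min p q) := by
    intro p q h hc
    exact h (le_antisymm (le_trans (le_trans (le_max_left p q) hc) (min_le_right p q))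
      (le_trans (le_trans (le_max_right p q) hc) (min_le_left p q)))
  -- the box representation
  set lf : (V ⊕ H.edgeSet) → Fin (t + 3) → ℝ := fun z i =>
    Sum.elim
      (fun v => if (i : ℕ) = 0 then 0 else (x ((i : ℕ) - 1) v : ℝ))
      (fun e => if (i : ℕ) = 0 then (gidx e : ℝ)
        else min (x ((i : ℕ) - 1) (ue e) : ℝ) (x ((i : ℕ) - 1) (we e) : ℝ)) z
    with hlfdef
  set rf : (V ⊕ H.edgeSet) → Fin (t + 3) → ℝ := fun z i =>
    Sum.elim
      (fun v => if (i : ℕ) = 0 then (M : ℝ) else (x ((i : ℕ) - 1) v : ℝ))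
      (fun e => if (i : ℕ) = 0 then (gidx e : ℝ)
        else max (x ((i : ℕ) - 1) (ue e) : ℝ) (x ((i : ℕ) - 1) (we e) : ℝ)) z
    with hrfdef
  have hle : ∀ (z : V ⊕ H.edgeSet) (i : Fin (t + 3)), lf z i ≤ rf z i := by
    rintro (v | e) i <;> simp only [hlfdef, hrfdef, Sum.elim_inl, Sum.elim_inr] <;>
      split
    · positivity
    · exact le_refl _
    · exact le_refl _
    · exact min_le_max
  -- intersection for adjacent pairs
  have hinter : ∀ (v : V) (e : H.edgeSet), v = ue e ∨ v = we e →
      ∀ i : Fin (t + 3),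
        max (lf (Sum.inl v) i) (lf (Sum.inr e) i)
          ≤ min (rf (Sum.inl v) i) (rf (Sum.inr e) i) := by
    intro v e hv i
    simp only [hlfdef, hrfdef, Sum.elim_inl, Sum.elim_inr]
    by_cases hi : (i : ℕ) = 0
    · rw [if_pos hi, if_pos hi, if_pos hi, if_pos hi]
      have hg0 : (0 : ℝ) ≤ (gidx e : ℝ) := Nat.cast_nonneg _
      have hgM : (gidx e : ℝ) ≤ (M : ℝ) := by exact_mod_cast le_of_lt (hglt e)
      refine le_min (max_le ?_ hgM) (max_le hg0 le_rfl)
      exact le_trans hg0 hgM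
    · rw [if_neg hi, if_neg hi, if_neg hi, if_neg hi]
      rcases hv with rfl | rfl
      · rw [max_eq_left (min_le_left _ _), min_eq_left (le_max_left _ _)]
      · rw [max_eq_left (min_le_right _ _), min_eq_left (le_max_right _ _)]
  -- adjacency characterizations
  have hAdj_lr : ∀ (v : V) (e : H.edgeSet),
      (fullSubdivision H).Adj (Sum.inl v) (Sum.inr e) ↔ v ∈ (e : Sym2 V) := by
    intro v e
    rw [fullSubdivision, SimpleGraph.fromRel_adj]
    constructor
    · rintro ⟨-, h | h⟩
      · exact h
      · exact h.elim
    · intro h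
      exact ⟨by simp, Or.inl h⟩
  have hAdj_ll : ∀ v v' : V, ¬ (fullSubdivision H).Adj (Sum.inl v) (Sum.inl v') := by
    intro v v' h
    rw [fullSubdivision, SimpleGraph.fromRel_adj] at h
    rcases h.2 with h' | h' <;> exact h'
  have hAdj_rr : ∀ e e' : H.edgeSet,
      ¬ (fullSubdivision H).Adj (Sum.inr e) (Sum.inr e') := by
    intro e e' h
    rw [fullSubdivision, SimpleGraph.fromRel_adj] at h
    rcases h.2 with h' | h' <;> exact h'
  -- the non-adjacency separation, packaged
  have hsepVE : ∀ (v : V) (e : H.edgeSet), v ≠ ue e → v ≠ we e →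
      ¬ ∀ i : Fin (t + 3),
        max (lf (Sum.inl v) i) (lf (Sum.inr e) i)
          ≤ min (rf (Sum.inl v) i) (rf (Sum.inr e) i) := by
    intro v e h1 h2 hall
    obtain ⟨j, hj, hor⟩ := main v e h1 h2
    have hi := hall ⟨j + 1, by omega⟩
    have hival : ((⟨j + 1, by omega⟩ : Fin (t + 3)) : ℕ) = j + 1 := rfl
    simp only [hlfdef, hrfdef, Sum.elim_inl, Sum.elim_inr, hival] at hi
    rw [if_neg (by omega), if_neg (by omega), if_neg (by omega), if_neg (by omega)] at hi
    have hj1 : j + 1 - 1 = j := rfl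
    rw [hj1] at hi
    refine hsepR _ _ _ ?_ hi
    rcases hor with ⟨ha, hb⟩ | ⟨ha, hb⟩
    · exact Or.inl ⟨by exact_mod_cast ha, by exact_mod_cast hb⟩
    · exact Or.inr ⟨by exact_mod_cast ha, by exact_mod_cast hb⟩
  -- main adjacency iff
  have hiff : ∀ z1 z2 : V ⊕ H.edgeSet, z1 ≠ z2 →
      ((fullSubdivision H).Adj z1 z2 ↔
        ∀ i, max (lf z1 i) (lf z2 i) ≤ min (rf z1 i) (rf z2 i)) := by
    have hcase : ∀ (v : V) (e : H.edgeSet),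
        ((fullSubdivision H).Adj (Sum.inl v) (Sum.inr e) ↔
          ∀ i, max (lf (Sum.inl v) i) (lf (Sum.inr e) i)
            ≤ min (rf (Sum.inl v) i) (rf (Sum.inr e) i)) := by
      intro v e
      rw [hAdj_lr, hmem]
      constructor
      · exact fun h => hinter v e h
      · intro hall
        by_contra hnot
        push_neg at hnot
        exact hsepVE v e hnot.1 hnot.2 hall
    rintro (v | e) (v' | e') hne
    · -- vertex-vertex
      refine iff_of_false (hAdj_ll v v') ?_
      intro hall
      have hvv : v ≠ v' := fun h => hne (by rw [h])
      have hi := hall ⟨1, by omega⟩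
      have hival : ((⟨1, by omega⟩ : Fin (t + 3)) : ℕ) = 1 := rfl
      simp only [hlfdef, Sum.elim_inl, hrfdef, hival] at hi
      rw [if_neg (by omega), if_neg (by omega), if_neg (by omega), if_neg (by omega)] at hi
      have hxne : x 0 v ≠ x 0 v' := fun h => hvv (hxinj 0 v v' h)
      exact hptsep _ _ (by exact_mod_cast hxne) hi
    · exact hcase v e'
    · -- edge-vertex: use symmetry
      rw [SimpleGraph.adj_comm]
      rw [hcase v' e]
      constructor <;> intro h i <;>
        · rw [max_comm, min_comm]
          exact h i
    · -- edge-edge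
      refine iff_of_false (hAdj_rr e e') ?_
      intro hall
      have hee : e ≠ e' := fun h => hne (by rw [h])
      have hi := hall ⟨0, by omega⟩
      have hival : ((⟨0, by omega⟩ : Fin (t + 3)) : ℕ) = 0 := rfl
      simp only [hlfdef, Sum.elim_inr, hrfdef, hival] at hi
      norm_num at hi
      exact hee (hginj _ _ (le_antisymm hi.2 hi.1))
  exact Nat.sInf_le ⟨lf, rf, hle, hiff⟩
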